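/- A third order Hermitian tensor A is positive definite if and only if for each fixed index i, the slice matrix A(i) = (a_{ijk})_{j,k} is a positive definite Hermitian matrix. -/

import Mathlib

open ComplexOrder

/-- A third order Hermitian tensor is positive definite iff each slice
matrix `A(i) = (a_{ijk})_{j,k}` is a positive definite (Hermitian) matrix. -/
theorem hermitian_tensor_pd_iff_slices_pd
    (n : ℕ) (A : Fin n → Fin n → Fin n → ℂ)
    (hH : ∀ i j k, A i j k = A j k i ∧ A i j k = A k i j ∧
      A i j k = star (A j i k) ∧ A i j k = star (A i k j) ∧
      A i j k = star (A k j i)) :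
    (∀ x : Fin n → ℂ, x ≠ 0 → ∀ i, 0 < ∑ j, ∑ k, A i j k * star (x j) * x k)
      ↔ ∀ i, Matrix.PosDef (Matrix.of fun j k => A i j k) := by
  have key : ∀ (i : Fin n) (x : Fin n → ℂ),
      dotProduct (star x) ((Matrix.of fun j k => A i j k).mulVec x)
        = ∑ j, ∑ k, A i j k * star (x j) * x k := by
    intro i x
    simp only [dotProduct, Matrix.mulVec, Matrix.of_apply, Pi.star_apply,
      Finset.mul_sum]
    exact Finset.sum_congr rfl fun j _ => Finset.sum_congr rfl fun k _ => by ring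
  constructor
  · intro h i
    refine Matrix.posDef_iff_dotProduct_mulVec.mpr ⟨?_, fun x hx => ?_⟩
    · ext j k
      simp only [Matrix.conjTranspose_apply, Matrix.of_apply]
      exact ((hH i j k).2.2.2.1).symm
    · rw [key]
      exact h x hx i
  · intro h x hx i
    rw [← key]
    exact (Matrix.posDef_iff_dotProduct_mulVec.mp (h i)).2 hx
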